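/- For every real p, the function S(p) = (2/sinh(πp/2)) ∫_0^{π/2} sin(u)·sinh(pu) du (interpreted at p = 0 as its limit) is even, decreasing in |p|, attains its maximum value 4/π at p = 0, and satisfies 0 < S(p) ≤ 4/π for all p. -/

import Mathlib

open Real

private lemma sinh_le_mul_cosh {t : ℝ} (ht : 0 ≤ t) : Real.sinh t ≤ t * Real.cosh t := by
  have h : MonotoneOn (fun t : ℝ => t * Real.cosh t - Real.sinh t) (Set.Ici 0) := by
    apply monotoneOn_of_deriv_nonneg (convex_Ici 0)
    · exact ((continuous_id.mul Real.continuous_cosh).sub Real.continuous_sinh).continuousOn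
    · intro x _
      exact (((hasDerivAt_id' x).mul (Real.hasDerivAt_cosh x)).sub
        (Real.hasDerivAt_sinh x)).differentiableAt.differentiableWithinAt
    · intro x hx
      rw [interior_Ici] at hx
      have hd : HasDerivAt (fun t : ℝ => t * Real.cosh t - Real.sinh t)
          (1 * Real.cosh x + x * Real.sinh x - Real.cosh x) x :=
        ((hasDerivAt_id' x).mul (Real.hasDerivAt_cosh x)).sub (Real.hasDerivAt_sinh x)
      rw [hd.deriv]
      have hs : 0 ≤ Real.sinh x := Real.sinh_nonneg_iff.mpr (le_of_lt hx)
      nlinarith [(le_of_lt hx : (0:ℝ) ≤ x)]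
  have h2 := h Set.self_mem_Ici (Set.mem_Ici.mpr ht) ht
  simp only [Real.cosh_zero, Real.sinh_zero, mul_one, zero_mul, sub_zero] at h2
  linarith

private lemma sinh_div_mono {d s : ℝ} (hd : 0 < d) (hds : d ≤ s) :
    s * Real.sinh d ≤ d * Real.sinh s := by
  have hs : 0 < s := hd.trans_le hds
  have hg : MonotoneOn (fun t : ℝ => Real.sinh t / t) (Set.Ioi 0) := by
    apply monotoneOn_of_deriv_nonneg (convex_Ioi 0)
    · apply ContinuousOn.div Real.continuous_sinh.continuousOn continuousOn_id
      intro x hx; exact ne_of_gt hx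
    · intro x hx
      rw [interior_Ioi] at hx
      exact ((Real.hasDerivAt_sinh x).div (hasDerivAt_id' x)
        (ne_of_gt hx)).differentiableAt.differentiableWithinAt
    · intro x hx
      rw [interior_Ioi] at hx
      have hx0 : (0:ℝ) < x := hx
      have hder := (Real.hasDerivAt_sinh x).div (hasDerivAt_id' x) (ne_of_gt hx0)
      rw [show deriv (fun t : ℝ => Real.sinh t / t) x = _ from hder.deriv]
      apply div_nonneg _ (sq_nonneg _)
      have := sinh_le_mul_cosh hx0.le
      nlinarith
  have h1 := hg (Set.mem_Ioi.mpr hd) (Set.mem_Ioi.mpr hs) hds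
  beta_reduce at h1
  rw [div_le_div_iff₀ hd hs] at h1
  linarith

private lemma coth_aux {a b : ℝ} (ha : 0 < a) (hab : a ≤ b) :
    a * Real.cosh a * Real.sinh b ≤ b * Real.cosh b * Real.sinh a := by
  rcases eq_or_lt_of_le hab with rfl | h
  · exact le_refl _
  · have hd : 0 < b - a := sub_pos.mpr h
    have hds : b - a ≤ a + b := by linarith
    have h1 := sinh_div_mono hd hds
    rw [Real.sinh_sub, Real.sinh_add] at h1
    nlinarith [h1]

private lemma ratio_anti {u c p q : ℝ} (hu : 0 ≤ u) (huc : u ≤ c) (hp : 0 < p)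
    (hpq : p ≤ q) :
    Real.sinh (q * u) * Real.sinh (p * c) ≤ Real.sinh (p * u) * Real.sinh (q * c) := by
  rcases eq_or_lt_of_le hu with h0 | hu0
  · rw [← h0]; simp
  · have hc : 0 < c := hu0.trans_le huc
    have hq : 0 < q := hp.trans_le hpq
    have hF : AntitoneOn (fun p : ℝ => Real.sinh (p * u) / Real.sinh (p * c))
        (Set.Ioi 0) := by
      apply antitoneOn_of_deriv_nonpos (convex_Ioi 0)
      · apply ContinuousOn.div
        · exact (Real.continuous_sinh.comp (continuous_id.mul continuous_const)).continuousOn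
        · exact (Real.continuous_sinh.comp (continuous_id.mul continuous_const)).continuousOn
        · intro x hx
          exact ne_of_gt (Real.sinh_pos_iff.mpr (mul_pos hx hc))
      · intro x hx
        rw [interior_Ioi] at hx
        have hx0 : (0:ℝ) < x := hx
        exact (((hasDerivAt_mul_const u).sinh).div ((hasDerivAt_mul_const c).sinh)
          (ne_of_gt (Real.sinh_pos_iff.mpr (mul_pos hx0 hc)))).differentiableAt.differentiableWithinAt
      · intro x hx
        rw [interior_Ioi] at hx
        have hx0 : (0:ℝ) < x := hx
        have hne : Real.sinh (x * c) ≠ 0 :=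
          ne_of_gt (Real.sinh_pos_iff.mpr (mul_pos hx0 hc))
        have hd := ((hasDerivAt_mul_const u).sinh).div ((hasDerivAt_mul_const c).sinh) hne
        rw [show deriv (fun p : ℝ => Real.sinh (p * u) / Real.sinh (p * c)) x = _ from hd.deriv]
        apply div_nonpos_of_nonpos_of_nonneg _ (sq_nonneg _)
        have key := coth_aux (mul_pos hx0 hu0) (mul_le_mul_of_nonneg_left huc hx0.le)
        have h2 : x * (Real.cosh (x * u) * u * Real.sinh (x * c) -
            Real.sinh (x * u) * (Real.cosh (x * c) * c)) ≤ x * 0 := by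
          rw [mul_zero]; nlinarith [key]
        have h3 := le_of_mul_le_mul_left h2 hx0
        linarith
    have h1 := hF (Set.mem_Ioi.mpr hp) (Set.mem_Ioi.mpr hq) hpq
    beta_reduce at h1
    rw [div_le_div_iff₀ (Real.sinh_pos_iff.mpr (mul_pos hq hc))
      (Real.sinh_pos_iff.mpr (mul_pos hp hc))] at h1
    exact h1

private lemma lin_bound {u c q : ℝ} (hu : 0 ≤ u) (huc : u ≤ c) (hq : 0 < q) :
    c * Real.sinh (q * u) ≤ u * Real.sinh (q * c) := by
  rcases eq_or_lt_of_le hu with h0 | hu0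
  · rw [← h0]; simp
  · have h1 := sinh_div_mono (mul_pos hq hu0) (mul_le_mul_of_nonneg_left huc hq.le)
    have h2 : q * (c * Real.sinh (q * u)) ≤ q * (u * Real.sinh (q * c)) := by
      calc q * (c * Real.sinh (q * u)) = q * c * Real.sinh (q * u) := by ring
        _ ≤ q * u * Real.sinh (q * c) := h1
        _ = q * (u * Real.sinh (q * c)) := by ring
    exact le_of_mul_le_mul_left h2 hq

private lemma integral_u_sin : ∫ u in (0:ℝ)..(π / 2), u * Real.sin u = 1 := by
  have hF : ∀ u : ℝ, HasDerivAt (fun u : ℝ => Real.sin u - u * Real.cos u)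
      (u * Real.sin u) u := by
    intro u
    have h : HasDerivAt (fun u : ℝ => Real.sin u - u * Real.cos u)
        (Real.cos u - (1 * Real.cos u + u * -Real.sin u)) u := (Real.hasDerivAt_sin u).sub ((hasDerivAt_id' u).mul (Real.hasDerivAt_cos u))
    convert h using 1
    ring
  rw [intervalIntegral.integral_eq_sub_of_hasDerivAt (fun u _ => hF u)
    ((continuous_id.mul Real.continuous_sin).intervalIntegrable _ _)]
  simp

/-- The function `S(p) = (2/sinh(πp/2)) ∫_0^{π/2} sin(u) sinh(pu) du` (with value
`4/π` at `p = 0`) is even, decreasing in `|p|`, attains its maximum `4/π` at `p = 0`,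
and satisfies `0 < S(p) ≤ 4/π`. -/
theorem S_reg_one_properties (S : ℝ → ℝ)
    (hS0 : S 0 = 4 / π)
    (hS : ∀ p : ℝ, p ≠ 0 → S p =
        2 / Real.sinh (π * p / 2) *
          ∫ u in (0 : ℝ)..(π / 2), Real.sin u * Real.sinh (p * u)) :
    (∀ p : ℝ, S (-p) = S p) ∧
    (∀ p q : ℝ, |p| ≤ |q| → S q ≤ S p) ∧
    (∀ p : ℝ, 0 < S p ∧ S p ≤ 4 / π) := by
  have hπ : (0:ℝ) < π := Real.pi_pos
  have hc : (0:ℝ) < π / 2 := by linarith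
  have hcont : ∀ p : ℝ, Continuous (fun u : ℝ => Real.sin u * Real.sinh (p * u)) :=
    fun p => Real.continuous_sin.mul
      (Real.continuous_sinh.comp (continuous_const.mul continuous_id))
  -- evenness
  have heven : ∀ p : ℝ, S (-p) = S p := by
    intro p
    rcases eq_or_ne p 0 with h | h
    · rw [h, neg_zero]
    · have h2 : (-p) ≠ 0 := neg_ne_zero.mpr h
      rw [hS p h, hS _ h2]
      have e1 : π * -p / 2 = -(π * p / 2) := by ring
      rw [e1, Real.sinh_neg]
      have e2 : (∫ u in (0:ℝ)..(π / 2), Real.sin u * Real.sinh (-p * u))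
          = -∫ u in (0:ℝ)..(π / 2), Real.sin u * Real.sinh (p * u) := by
        rw [← intervalIntegral.integral_neg]
        apply intervalIntegral.integral_congr
        intro u _
        show Real.sin u * Real.sinh (-p * u) = -(Real.sin u * Real.sinh (p * u))
        rw [neg_mul, Real.sinh_neg]
        ring
      rw [e2, div_neg]
      ring
  -- positivity of sinh (π p / 2) for p > 0
  have hσ : ∀ p : ℝ, 0 < p → 0 < Real.sinh (π * p / 2) := by
    intro p hp
    exact Real.sinh_pos_iff.mpr (by positivity)
  -- S q ≤ 4/π for q > 0
  have hmono0 : ∀ q : ℝ, 0 < q → S q ≤ 4 / π := by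
    intro q hq
    rw [hS q hq.ne']
    have hσq := hσ q hq
    have key : (∫ u in (0:ℝ)..(π / 2), Real.sin u * Real.sinh (q * u))
        ≤ ∫ u in (0:ℝ)..(π / 2), (u * Real.sin u) * (Real.sinh (π * q / 2) / (π / 2)) := by
      apply intervalIntegral.integral_mono_on hc.le
        ((hcont q).intervalIntegrable _ _)
        (((continuous_id.mul Real.continuous_sin).mul continuous_const).intervalIntegrable _ _)
      intro u hu
      obtain ⟨hu0, hu1⟩ := hu
      have hsin : 0 ≤ Real.sin u :=
        Real.sin_nonneg_of_nonneg_of_le_pi hu0 (by linarith)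
      have hlin := lin_bound hu0 hu1 hq
      have e3 : q * (π / 2) = π * q / 2 := by ring
      rw [e3] at hlin
      have h4 : Real.sinh (q * u) ≤ u * Real.sinh (π * q / 2) / (π / 2) := by
        rw [le_div_iff₀ hc]
        nlinarith
      calc Real.sin u * Real.sinh (q * u)
          ≤ Real.sin u * (u * Real.sinh (π * q / 2) / (π / 2)) :=
            mul_le_mul_of_nonneg_left h4 hsin
        _ = (u * Real.sin u) * (Real.sinh (π * q / 2) / (π / 2)) := by ring
    rw [intervalIntegral.integral_mul_const, integral_u_sin, one_mul] at key
    have h5 : 2 / Real.sinh (π * q / 2) *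
        (∫ u in (0:ℝ)..(π / 2), Real.sin u * Real.sinh (q * u))
        ≤ 2 / Real.sinh (π * q / 2) * (Real.sinh (π * q / 2) / (π / 2)) :=
      mul_le_mul_of_nonneg_left key (by positivity)
    have h6 : 2 / Real.sinh (π * q / 2) * (Real.sinh (π * q / 2) / (π / 2)) = 4 / π := by
      field_simp
      ring
    linarith
  -- S q ≤ S p for 0 < p ≤ q
  have hmonoP : ∀ p q : ℝ, 0 < p → p ≤ q → S q ≤ S p := by
    intro p q hp hpq
    have hq : 0 < q := hp.trans_le hpq
    rw [hS p hp.ne', hS q hq.ne']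
    have ha := hσ p hp
    have hb := hσ q hq
    have key : (∫ u in (0:ℝ)..(π / 2), Real.sin u * Real.sinh (q * u)) *
          Real.sinh (π * p / 2)
        ≤ (∫ u in (0:ℝ)..(π / 2), Real.sin u * Real.sinh (p * u)) *
          Real.sinh (π * q / 2) := by
      rw [← intervalIntegral.integral_mul_const, ← intervalIntegral.integral_mul_const]
      apply intervalIntegral.integral_mono_on hc.le
        (((hcont q).mul continuous_const).intervalIntegrable _ _)
        (((hcont p).mul continuous_const).intervalIntegrable _ _)
      intro u hu
      obtain ⟨hu0, hu1⟩ := hu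
      have hsin : 0 ≤ Real.sin u :=
        Real.sin_nonneg_of_nonneg_of_le_pi hu0 (by linarith)
      have hr := ratio_anti hu0 hu1 hp hpq
      have e1 : p * (π / 2) = π * p / 2 := by ring
      have e2 : q * (π / 2) = π * q / 2 := by ring
      rw [e1, e2] at hr
      show Real.sin u * Real.sinh (q * u) * Real.sinh (π * p / 2) ≤ Real.sin u * Real.sinh (p * u) * Real.sinh (π * q / 2)
      nlinarith
    rw [div_mul_eq_mul_div, div_mul_eq_mul_div, div_le_div_iff₀ hb ha]
    nlinarith [key]
  -- positivity for p > 0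
  have hposP : ∀ p : ℝ, 0 < p → 0 < S p := by
    intro p hp
    rw [hS p hp.ne']
    have hI : 0 < ∫ u in (0:ℝ)..(π / 2), Real.sin u * Real.sinh (p * u) := by
      apply intervalIntegral.intervalIntegral_pos_of_pos_on
        ((hcont p).intervalIntegrable _ _)
      · intro x hx
        obtain ⟨hx0, hx1⟩ := hx
        exact mul_pos (Real.sin_pos_of_pos_of_lt_pi hx0 (by linarith))
          (Real.sinh_pos_iff.mpr (mul_pos hp hx0))
      · exact hc
    exact mul_pos (by positivity) hI
  -- abs reduction
  have habs : ∀ p : ℝ, S |p| = S p := by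
    intro p
    rcases abs_choice p with h | h
    · rw [h]
    · rw [h, heven]
  -- monotone on nonneg
  have hmain : ∀ p q : ℝ, 0 ≤ p → p ≤ q → S q ≤ S p := by
    intro p q hp0 hpq
    rcases eq_or_lt_of_le hp0 with h0 | hp
    · rcases eq_or_lt_of_le (h0 ▸ hpq : (0:ℝ) ≤ q) with h1 | h1
      · rw [← h1, ← h0]
      · rw [← h0, hS0]
        exact hmono0 q h1
    · exact hmonoP p q hp hpq
  refine ⟨heven, ?_, ?_⟩
  · intro p q h
    calc S q = S |q| := (habs q).symm
      _ ≤ S |p| := hmain |p| |q| (abs_nonneg p) h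
      _ = S p := habs p
  · intro p
    constructor
    · rcases eq_or_ne p 0 with h | h
      · rw [h, hS0]; positivity
      · rw [← habs p]
        exact hposP |p| (abs_pos.mpr h)
    · have h1 := hmain 0 |p| le_rfl (abs_nonneg p)
      rw [habs p, hS0] at h1
      exact h1
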